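/- For a ∈ ℝ^n and k ∈ ℝ define the open set U^a(k) = {γ ∈ ℝ^n : γ_l < a_l for all l, and Σ_{l=1}^n γ_l > k + Σ_{l=1}^n a_l}. Then: (i) U^a(k) is nonempty if and only if k < 0; and (ii) for any i ∈ ℝ, any j < 0 and any b ∈ ℝ^n, one has U^b(j) ⊆ U^0(i) if and only if b_l ≤ 0 for all l and Σ_{l=1}^n b_l ≥ i − j. -/

import Mathlib

open scoped BigOperators

/-- The open cell `U^a(k) = {γ ∈ ℝⁿ : γ_l < a_l, ∑ γ_l > k + ∑ a_l}`. -/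
def openCellU (n : ℕ) (a : Fin n → ℝ) (k : ℝ) : Set (Fin n → ℝ) :=
  {γ | (∀ l, γ l < a l) ∧ k + ∑ l, a l < ∑ l, γ l}

theorem stmt_11 (n : ℕ) (hn : 1 ≤ n) :
    -- (i) nonemptiness
    (∀ (a : Fin n → ℝ) (k : ℝ), (openCellU n a k).Nonempty ↔ k < 0) ∧
    -- (ii) containment criterion
    (∀ (i j : ℝ), j < 0 → ∀ b : Fin n → ℝ,
      (openCellU n b j ⊆ openCellU n 0 i ↔ (∀ l, b l ≤ 0) ∧ i - j ≤ ∑ l, b l)) := by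
  have hnpos : 0 < (n : ℝ) := by exact_mod_cast hn
  have hn0 : (n : ℝ) ≠ 0 := ne_of_gt hnpos
  have hne : (Finset.univ : Finset (Fin n)).Nonempty := by
    simpa [Finset.univ_nonempty_iff] using Fin.pos_iff_nonempty.mp hn
  have sum_shift : ∀ (a : Fin n → ℝ) (c : ℝ),
      ∑ l, (a l + c) = (∑ l, a l) + n * c := by
    intro a c
    rw [Finset.sum_add_distrib, Finset.sum_const, Finset.card_univ, Fintype.card_fin,
      nsmul_eq_mul]
  constructor
  · intro a k
    constructor
    · rintro ⟨γ, hγ1, hγ2⟩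
      have hlt : ∑ l, γ l < ∑ l, a l :=
        Finset.sum_lt_sum_of_nonempty hne (fun l _ => hγ1 l)
      linarith
    · intro hk
      refine ⟨fun l => a l + k / (2 * n), fun l => ?_, ?_⟩
      · have : k / (2 * n) < 0 := div_neg_of_neg_of_pos hk (by positivity)
        linarith
      · rw [sum_shift]
        have : (n : ℝ) * (k / (2 * n)) = k / 2 := by field_simp
        rw [this]; linarith
  · intro i j hj b
    constructor
    · intro hsub
      constructor
      · intro m
        by_contra hm
        push_neg at hm
        set δ := min (b m) (-j / n) / 2 with hδdef
        have hδpos : 0 < δ := by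
          apply div_pos _ (by norm_num)
          exact lt_min hm (div_pos (by linarith) hnpos)
        have hδ1 : δ ≤ b m / 2 := by
          have := min_le_left (b m) (-j / n); linarith
        have hδ2 : (n : ℝ) * δ < -j := by
          have h1 : δ ≤ (-j / n) / 2 := by
            have := min_le_right (b m) (-j / n); linarith
          have h2 : (n : ℝ) * δ ≤ (n : ℝ) * ((-j / n) / 2) :=
            mul_le_mul_of_nonneg_left h1 (le_of_lt hnpos)
          have h3 : (n : ℝ) * ((-j / n) / 2) = -j / 2 := by field_simp
          linarith
        have hmem : (fun l => b l - δ) ∈ openCellU n b j := by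
          refine ⟨fun l => by simp [hδpos], ?_⟩
          have : ∑ l, (b l - δ) = (∑ l, b l) + n * (-δ) := by
            simpa [sub_eq_add_neg] using sum_shift b (-δ)
          rw [this]; linarith
        have := (hsub hmem).1 m
        simp only [Pi.zero_apply] at this
        linarith
      · by_contra hs
        push_neg at hs
        set δ := min (-j) (i - j - ∑ l, b l) / 2 with hδdef
        have hδpos : 0 < δ := by
          apply div_pos _ (by norm_num)
          exact lt_min (by linarith) (by linarith)
        have hδ1 : δ ≤ -j / 2 := by
          have := min_le_left (-j) (i - j - ∑ l, b l); linarith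
        have hδ2 : δ ≤ (i - j - ∑ l, b l) / 2 := by
          have := min_le_right (-j) (i - j - ∑ l, b l); linarith
        have hneg : (j + δ) / n < 0 :=
          div_neg_of_neg_of_pos (by linarith) hnpos
        have hmem : (fun l => b l + (j + δ) / n) ∈ openCellU n b j := by
          refine ⟨fun l => by linarith, ?_⟩
          rw [sum_shift]
          have : (n : ℝ) * ((j + δ) / n) = j + δ := by field_simp
          rw [this]; linarith
        have h2 := (hsub hmem).2
        rw [sum_shift] at h2
        have h3 : (n : ℝ) * ((j + δ) / n) = j + δ := by field_simp
        rw [h3] at h2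
        have h4 : ∑ l, (0 : Fin n → ℝ) l = 0 := by simp
        rw [h4] at h2
        linarith
    · rintro ⟨hb, hs⟩ γ ⟨hγ1, hγ2⟩
      refine ⟨fun l => lt_of_lt_of_le (hγ1 l) (hb l), ?_⟩
      have : ∑ l, (0 : Fin n → ℝ) l = 0 := by simp
      rw [this]
      linarith
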